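/- Let n ≥ 6 and let i be an integer with ⌊n/3⌋ + 2 ≤ i ≤ ⌊n/2⌋. Then the number of accurate dominating sets of the cycle C_n of cardinality i satisfies d_a(C_n, i) ≥ Σ_{k=3}^{i−1} (k+2) · d(P_{n−k−2}, i−k). -/

import Mathlib

/-- `D` is a dominating set of the simple graph `G`: every vertex not in `D`
is adjacent to at least one vertex in `D`. -/
def IsDomSet {V : Type*} (G : SimpleGraph V) (D : Finset V) : Prop :=
  ∀ v : V, v ∉ D → ∃ u ∈ D, G.Adj u v

/-- `D` is an accurate dominating set of `G`: a dominating set such that no subset of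
`V \ D` of cardinality `|D|` is a dominating set of `G`. -/
def IsAccDomSet {V : Type*} (G : SimpleGraph V) (D : Finset V) : Prop :=
  IsDomSet G D ∧
    ∀ E : Finset V, (∀ v ∈ E, v ∉ D) → E.card = D.card → ¬ IsDomSet G E

/-- The domination number of `G`: the minimum cardinality of a dominating set. -/
noncomputable def domNum {V : Type*} (G : SimpleGraph V) : ℕ :=
  sInf {k | ∃ D : Finset V, IsDomSet G D ∧ D.card = k}

/-- The accurate domination number of `G`: the minimum cardinality of an accurate
dominating set. -/
noncomputable def accDomNum {V : Type*} (G : SimpleGraph V) : ℕ :=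
  sInf {k | ∃ D : Finset V, IsAccDomSet G D ∧ D.card = k}

/-- `d(G,i)`: the number of dominating sets of `G` of cardinality `i`. -/
noncomputable def numDomSets {V : Type*} (G : SimpleGraph V) (i : ℕ) : ℕ :=
  Set.ncard {D : Finset V | IsDomSet G D ∧ D.card = i}

/-- `d_a(G,i)`: the number of accurate dominating sets of `G` of cardinality `i`. -/
noncomputable def numAccDomSets {V : Type*} (G : SimpleGraph V) (i : ℕ) : ℕ :=
  Set.ncard {D : Finset V | IsAccDomSet G D ∧ D.card = i}

open Finset SimpleGraph
open scoped Fin.NatCast Fin.CommRing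

section Aux
variable {n : ℕ} [NeZero n]
set_option linter.unusedSectionVars false

/-- embed a set of offsets into `Fin n` at base `β`. -/
def emb (β : Fin n) (O : Finset ℕ) : Finset (Fin n) :=
  O.image (fun (a : ℕ) => β + (a : Fin n))

/-- offset pattern: a block `[0,k)` plus a path part shifted by `k+1`. -/
def offs (k : ℕ) (s : Finset ℕ) : Finset ℕ :=
  Finset.range k ∪ s.image (fun p => k + 1 + p)

lemma cast_inj_lt {a b : ℕ} (ha : a < n) (hb : b < n) (h : (a : Fin n) = b) : a = b := by
  have := congrArg Fin.val h
  rwa [Fin.val_cast_of_lt ha, Fin.val_cast_of_lt hb] at this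

lemma mem_emb {β : Fin n} {O : Finset ℕ} (hO : O ⊆ Finset.range n) {a : ℕ} (ha : a < n) :
    β + (a : Fin n) ∈ emb β O ↔ a ∈ O := by
  constructor
  · intro h
    obtain ⟨c, hc, hce⟩ := Finset.mem_image.1 h
    have : (c : Fin n) = a := by
      have := add_left_cancel hce; exact this
    rwa [cast_inj_lt (Finset.mem_range.1 (hO hc)) ha this] at hc
  · intro h
    exact Finset.mem_image.2 ⟨a, h, rfl⟩

lemma emb_card {β : Fin n} {O : Finset ℕ} (hO : O ⊆ Finset.range n) :
    (emb β O).card = O.card := by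
  rw [emb, Finset.card_image_of_injOn]
  intro a ha b hb h
  exact cast_inj_lt (Finset.mem_range.1 (hO ha)) (Finset.mem_range.1 (hO hb))
    (add_left_cancel h)

lemma offs_subset {k : ℕ} {s : Finset ℕ} (hk : k + 2 ≤ n) (hs : s ⊆ Finset.range (n - k - 2)) :
    offs k s ⊆ Finset.range (n - 1) := by
  intro a ha
  rcases Finset.mem_union.1 ha with h | h
  · exact Finset.mem_range.2 (by have := Finset.mem_range.1 h; omega)
  · obtain ⟨p, hp, rfl⟩ := Finset.mem_image.1 h
    have := Finset.mem_range.1 (hs hp)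
    exact Finset.mem_range.2 (by omega)

lemma offs_card {k : ℕ} {s : Finset ℕ} :
    (offs k s).card = k + s.card := by
  rw [offs, Finset.card_union_of_disjoint, Finset.card_range,
    Finset.card_image_of_injective _ (fun a b h => by omega)]
  rw [Finset.disjoint_left]
  intro a ha hb
  obtain ⟨p, _, rfl⟩ := Finset.mem_image.1 hb
  have := Finset.mem_range.1 ha
  omega

lemma offs_inj {k : ℕ} {s s' : Finset ℕ} (h : offs k s = offs k s') : s = s' := by
  have key : ∀ (u v : Finset ℕ), offs k u = offs k v → u ⊆ v := by
    intro u v huv p hp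
    have : k + 1 + p ∈ offs k v := by
      rw [← huv]
      exact Finset.mem_union_right _ (Finset.mem_image.2 ⟨p, hp, rfl⟩)
    rcases Finset.mem_union.1 this with h' | h'
    · have := Finset.mem_range.1 h'; omega
    · obtain ⟨q, hq, hqe⟩ := Finset.mem_image.1 h'
      have : q = p := by omega
      rwa [← this]
  exact Finset.Subset.antisymm (key _ _ h) (key _ _ h.symm)

lemma fin_one_val (hn : 2 ≤ n) : ((1 : Fin n) : ℕ) = 1 := by
  rw [Fin.val_one']; exact Nat.mod_eq_of_lt (by omega)

lemma cyc_adj_iff (hn : 2 ≤ n) {u v : Fin n} :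
    (cycleGraph n).Adj u v ↔ u = v + 1 ∨ v = u + 1 := by
  rw [cycleGraph_adj']
  have h1 : ∀ w x : Fin n, (w - x).val = 1 ↔ w = x + 1 := by
    intro w x
    constructor
    · intro h
      have : w - x = 1 := by
        apply Fin.ext; rw [h, fin_one_val hn]
      rw [sub_eq_iff_eq_add] at this
      rw [this, add_comm]
    · intro h
      rw [h]; rw [add_comm, add_sub_cancel_right, fin_one_val hn]
  rw [h1, h1]

lemma cast_succ_eq (a : ℕ) : ((a + 1 : ℕ) : Fin n) = (a : Fin n) + 1 := by
  push_cast; ring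

lemma rep_off (β u : Fin n) : u = β + (((u - β).val : ℕ) : Fin n) := by
  rw [Fin.cast_val_eq_self]; ring

lemma encode_dom {k : ℕ} (hk : 1 ≤ k) (hkn : k + 2 ≤ n) (β : Fin n)
    {S : Finset (Fin (n - k - 2))} (hS : IsDomSet (pathGraph (n - k - 2)) S) :
    IsDomSet (cycleGraph n) (emb β (offs k (S.map ⟨Fin.val, Fin.val_injective⟩))) := by
  set s : Finset ℕ := S.map ⟨Fin.val, Fin.val_injective⟩ with hs_def
  have hs : s ⊆ Finset.range (n - k - 2) := by
    intro p hp
    obtain ⟨q, _, rfl⟩ := Finset.mem_map.1 hp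
    exact Finset.mem_range.2 q.isLt
  have hsub : offs k s ⊆ Finset.range (n - 1) := offs_subset hkn hs
  have hsub' : offs k s ⊆ Finset.range n := hsub.trans (by
    intro a ha; exact Finset.mem_range.2 (by have := Finset.mem_range.1 ha; omega))
  have hmem : ∀ a : ℕ, a < n → (a ∈ offs k s ↔ β + (a : Fin n) ∈ emb β (offs k s)) :=
    fun a ha => (mem_emb hsub' ha).symm
  intro u hu
  set r : ℕ := (u - β).val with hr_def
  have hrn : r < n := (u - β).isLt
  have hu_eq : u = β + (r : Fin n) := rep_off β u
  have hro : r ∉ offs k s := by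
    intro h; exact hu (by rw [hu_eq]; exact (hmem r hrn).1 h)
  have hadj : ∀ a : ℕ, (a + 1 = r ∨ r + 1 = a ∨ (a = 0 ∧ r = n - 1) ∨ (r = 0 ∧ a = n - 1)) →
      (cycleGraph n).Adj (β + (a : Fin n)) u := by
    intro a ha
    rw [cyc_adj_iff (by omega), hu_eq]
    have hwrap : ((n - 1 : ℕ) : Fin n) + 1 = ((0 : ℕ) : Fin n) := by
      rw [← cast_succ_eq]
      have : n - 1 + 1 = n := by omega
      rw [this, Fin.natCast_self, Nat.cast_zero]
    rcases ha with h | h | ⟨h1, h2⟩ | ⟨h1, h2⟩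
    · right; rw [← h, cast_succ_eq]; ring
    · left; rw [← h, cast_succ_eq]; ring
    · left; rw [h1, h2, add_assoc, hwrap]
    · right; rw [h1, h2, add_assoc, hwrap]
  have hblock : ∀ m : ℕ, m < k → β + (m : Fin n) ∈ emb β (offs k s) := by
    intro m hm
    exact (hmem m (by omega)).1 (Finset.mem_union_left _ (Finset.mem_range.2 hm))
  -- case analysis on r
  by_cases hr1 : r < k
  · exact absurd (Finset.mem_union_left _ (Finset.mem_range.2 hr1)) hro
  by_cases hr2 : r = k
  · exact ⟨β + ((k - 1 : ℕ) : Fin n), hblock _ (by omega), hadj _ (by omega)⟩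
  by_cases hr3 : r = n - 1
  · exact ⟨β + ((0 : ℕ) : Fin n), hblock _ (by omega), hadj _ (by omega)⟩
  -- path case
  have hrr : k + 1 ≤ r ∧ r ≤ n - 2 := by omega
  set p : ℕ := r - (k + 1) with hp_def
  have hpm : p < n - k - 2 := by omega
  have hps : (⟨p, hpm⟩ : Fin (n - k - 2)) ∉ S := by
    intro h
    apply hro
    refine Finset.mem_union_right _ (Finset.mem_image.2 ⟨p, ?_, by omega⟩)
    exact Finset.mem_map.2 ⟨⟨p, hpm⟩, h, rfl⟩
  obtain ⟨q, hq, hqadj⟩ := hS _ hps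
  rw [pathGraph_adj] at hqadj
  refine ⟨β + ((k + 1 + q.val : ℕ) : Fin n), ?_, ?_⟩
  · exact (hmem _ (by have := q.isLt; omega)).1
      (Finset.mem_union_right _ (Finset.mem_image.2 ⟨q.val, Finset.mem_map.2 ⟨q, hq, rfl⟩, rfl⟩))
  · apply hadj
    simp only [] at hqadj
    rcases hqadj with h | h
    · left; omega
    · right; left; omega

lemma encode_acc {k : ℕ} (hk : 3 ≤ k) (hkn : k + 2 ≤ n) (β : Fin n)
    {s : Finset ℕ} (hs : s ⊆ Finset.range (n - k - 2))
    (E : Finset (Fin n)) (hE : ∀ v ∈ E, v ∉ emb β (offs k s)) :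
    ¬ IsDomSet (cycleGraph n) E := by
  intro hdom
  have hsub' : offs k s ⊆ Finset.range n := (offs_subset hkn hs).trans (by
    intro a ha; exact Finset.mem_range.2 (by have := Finset.mem_range.1 ha; omega))
  have hblock : ∀ m : ℕ, m < k → β + (m : Fin n) ∈ emb β (offs k s) := by
    intro m hm
    exact (mem_emb hsub' (by omega)).2 (Finset.mem_union_left _ (Finset.mem_range.2 hm))
  have h1 : β + ((1 : ℕ) : Fin n) ∉ E := fun h => hE _ h (hblock 1 (by omega))
  obtain ⟨w, hw, hadj⟩ := hdom _ h1
  rw [cyc_adj_iff (by omega)] at hadj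
  rcases hadj with h | h
  · apply hE w hw
    have : w = β + ((2 : ℕ) : Fin n) := by rw [h]; push_cast; ring
    rw [this]; exact hblock 2 (by omega)
  · apply hE w hw
    have : w = β + ((0 : ℕ) : Fin n) := by
      have := congrArg (fun x => x - 1) h
      simp only [add_sub_cancel_right] at this
      rw [← this]; push_cast; ring
    rw [this]; exact hblock 0 (by omega)

lemma base_le_eq {D : Finset (Fin n)} {β1 β2 : Fin n} {k2 d1 d2 : ℕ}
    (h1' : β1 + ((n - 1 : ℕ) : Fin n) ∉ D)
    (h2 : ∀ m : ℕ, m < k2 → β2 + (m : Fin n) ∈ D)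
    (hd2 : d2 < k2) (hle : d1 ≤ d2)
    (hv : β1 + ((d1 : ℕ) : Fin n) = β2 + ((d2 : ℕ) : Fin n)) (hn2 : 1 ≤ n) :
    β1 = β2 := by
  have hb : β1 = β2 + (((d2 - d1 : ℕ)) : Fin n) := by
    have : ((d2 - d1 : ℕ) : Fin n) = ((d2 : ℕ) : Fin n) - ((d1 : ℕ) : Fin n) := by
      rw [Nat.cast_sub hle]
    rw [this]
    have := congrArg (fun x => x - ((d1 : ℕ) : Fin n)) hv
    simp only [add_sub_cancel_right] at this
    rw [this]; ring
  rcases Nat.eq_zero_or_pos (d2 - d1) with he | he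
  · rw [hb, he, Nat.cast_zero, add_zero]
  · exfalso
    apply h1'
    have : β1 + ((n - 1 : ℕ) : Fin n) = β2 + ((d2 - d1 - 1 : ℕ) : Fin n) := by
      rw [hb, add_assoc, ← Nat.cast_add]
      have h9 : d2 - d1 + (n - 1) = (d2 - d1 - 1) + n := by omega
      rw [h9, Nat.cast_add, Fin.natCast_self, add_zero]
    rw [this]
    exact h2 _ (by omega)

lemma run_eq {D : Finset (Fin n)} {β1 β2 : Fin n} {k1 k2 d1 d2 : ℕ}
    (h1 : ∀ m : ℕ, m < k1 → β1 + (m : Fin n) ∈ D)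
    (h1l : β1 + ((n - 1 : ℕ) : Fin n) ∉ D) (h1r : β1 + ((k1 : ℕ) : Fin n) ∉ D)
    (h2 : ∀ m : ℕ, m < k2 → β2 + (m : Fin n) ∈ D)
    (h2l : β2 + ((n - 1 : ℕ) : Fin n) ∉ D) (h2r : β2 + ((k2 : ℕ) : Fin n) ∉ D)
    (hd1 : d1 < k1) (hd2 : d2 < k2)
    (hv : β1 + ((d1 : ℕ) : Fin n) = β2 + ((d2 : ℕ) : Fin n)) (hn2 : 1 ≤ n) :
    β1 = β2 ∧ k1 = k2 := by
  have hβ : β1 = β2 := by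
    rcases le_total d1 d2 with h | h
    · exact base_le_eq h1l h2 hd2 h hv hn2
    · exact (base_le_eq h2l h1 hd1 h hv.symm hn2).symm
  subst hβ
  refine ⟨rfl, ?_⟩
  by_contra hne
  rcases Nat.lt_or_ge k1 k2 with h | h
  · exact h1r (h2 _ h)
  · exact h2r (h1 _ (by omega))
end Aux


open scoped Classical in
noncomputable def dsFin (m j : ℕ) : Finset (Finset (Fin m)) :=
  Finset.univ.filter (fun S => IsDomSet (pathGraph m) S ∧ S.card = j)

open scoped Classical in
noncomputable def adsFin (n i : ℕ) : Finset (Finset (Fin n)) :=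
  Finset.univ.filter (fun D => IsAccDomSet (cycleGraph n) D ∧ D.card = i)

open scoped Classical in
lemma numDomSets_eq_card (m j : ℕ) : numDomSets (pathGraph m) j = (dsFin m j).card := by
  rw [numDomSets, dsFin]
  rw [show {D : Finset (Fin m) | IsDomSet (pathGraph m) D ∧ D.card = j}
      = ↑(Finset.univ.filter (fun S : Finset (Fin m) => IsDomSet (pathGraph m) S ∧ S.card = j))
    by ext D; simp]
  rw [Set.ncard_coe_finset]

open scoped Classical in
lemma numAccDomSets_eq_card (n i : ℕ) :
    numAccDomSets (cycleGraph n) i = (adsFin n i).card := by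
  rw [numAccDomSets, adsFin]
  rw [show {D : Finset (Fin n) | IsAccDomSet (cycleGraph n) D ∧ D.card = i}
      = ↑(Finset.univ.filter
          (fun D : Finset (Fin n) => IsAccDomSet (cycleGraph n) D ∧ D.card = i))
    by ext D; simp]
  rw [Set.ncard_coe_finset]

noncomputable def domainD (n i : ℕ) : Finset (ℕ × ℕ × Fin n × Finset ℕ) :=
  (Finset.Icc 3 (i-1)).biUnion (fun k =>
    ({k} : Finset ℕ) ×ˢ (Finset.range (k+2) ×ˢ ((Finset.univ : Finset (Fin n)) ×ˢ
      (dsFin (n-k-2) (i-k)).image (fun S => S.map ⟨Fin.val, Fin.val_injective⟩))))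

noncomputable def targetQ (n i : ℕ) : Finset (Finset (Fin n) × Fin n × Bool) :=
  (adsFin n i).biUnion (fun D => ({D} : Finset (Finset (Fin n))) ×ˢ
    (D ×ˢ (Finset.univ : Finset Bool)))

lemma card_domainD (n i : ℕ) :
    (domainD n i).card
      = ∑ k ∈ Finset.Icc 3 (i-1), (k+2) * (n * (dsFin (n-k-2) (i-k)).card) := by
  rw [domainD, Finset.card_biUnion]
  · refine Finset.sum_congr rfl (fun k _ => ?_)
    rw [Finset.card_product, Finset.card_product, Finset.card_product,
      Finset.card_singleton, Finset.card_range, Finset.card_univ, Fintype.card_fin,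
      Finset.card_image_of_injective _ (Finset.map_injective _), one_mul]
  · intro k hk k' hk' hne
    rw [Function.onFun, Finset.disjoint_left]
    intro x hx hx'
    rw [Finset.mem_product] at hx hx'
    exact hne (by
      have h1 := Finset.mem_singleton.1 hx.1
      have h2 := Finset.mem_singleton.1 hx'.1
      omega)

open scoped Classical in
lemma card_targetQ (n i : ℕ) :
    (targetQ n i).card = (adsFin n i).card * (i * 2) := by
  rw [targetQ, Finset.card_biUnion]
  · have hcong : ∀ D ∈ adsFin n i, (({D} : Finset (Finset (Fin n))) ×ˢ
        (D ×ˢ (Finset.univ : Finset Bool))).card = i * 2 := by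
      intro D hD
      rw [Finset.card_product, Finset.card_product, Finset.card_singleton,
        Finset.card_univ, one_mul]
      have : D.card = i := by
        rw [adsFin] at hD
        exact (Finset.mem_filter.1 hD).2.2
      rw [this]; rfl
    rw [Finset.sum_congr rfl hcong, Finset.sum_const, smul_eq_mul]
  · intro D hD D' hD' hne
    rw [Function.onFun, Finset.disjoint_left]
    intro x hx hx'
    rw [Finset.mem_product] at hx hx'
    exact hne (by
      have h1 := Finset.mem_singleton.1 hx.1
      have h2 := Finset.mem_singleton.1 hx'.1
      rw [← h1, ← h2])

noncomputable def Fmap (n : ℕ) [NeZero n] :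
    ℕ × ℕ × Fin n × Finset ℕ → Finset (Fin n) × Fin n × Bool :=
  fun x =>
    let k := x.1; let j := x.2.1; let t := x.2.2.1; let s := x.2.2.2
    let β : Fin n := t - ((j : ℕ) : Fin n) + 1
    (emb β (offs k s),
     if j = 0 then (β, true) else if j = k+1 then (β + 1, true) else (t, false))

section Main
variable {n : ℕ} [NeZero n]
set_option linter.unusedSectionVars false

lemma emb_inj {β : Fin n} {O O' : Finset ℕ} (hO : O ⊆ Finset.range n)
    (hO' : O' ⊆ Finset.range n) (h : emb β O = emb β O') : O = O' := by
  ext a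
  constructor
  · intro ha
    have : β + (a : Fin n) ∈ emb β O' := by
      rw [← h]; exact (mem_emb hO (Finset.mem_range.1 (hO ha))).2 ha
    exact (mem_emb hO' (Finset.mem_range.1 (hO ha))).1 this
  · intro ha
    have : β + (a : Fin n) ∈ emb β O := by
      rw [h]; exact (mem_emb hO' (Finset.mem_range.1 (hO' ha))).2 ha
    exact (mem_emb hO (Finset.mem_range.1 (hO' ha))).1 this

lemma block_facts {k : ℕ} (hk3 : 1 ≤ k) (hkn : k + 4 ≤ n) {s : Finset ℕ}
    (hs : s ⊆ Finset.range (n - k - 2)) (β : Fin n) :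
    (∀ m : ℕ, m < k → β + ((m : ℕ) : Fin n) ∈ emb β (offs k s))
    ∧ β + ((n - 1 : ℕ) : Fin n) ∉ emb β (offs k s)
    ∧ β + ((k : ℕ) : Fin n) ∉ emb β (offs k s)
    ∧ (emb β (offs k s)).card = k + s.card
    ∧ offs k s ⊆ Finset.range n := by
  have hsub : offs k s ⊆ Finset.range (n - 1) := offs_subset (by omega) hs
  have hsub' : offs k s ⊆ Finset.range n := hsub.trans (by
    intro a ha; exact Finset.mem_range.2 (by have := Finset.mem_range.1 ha; omega))
  refine ⟨?_, ?_, ?_, ?_, hsub'⟩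
  · intro m hm
    exact (mem_emb hsub' (by omega)).2 (Finset.mem_union_left _ (Finset.mem_range.2 hm))
  · intro h
    have := (mem_emb hsub' (by omega)).1 h
    have := Finset.mem_range.1 (hsub this)
    omega
  · intro h
    have hmem := (mem_emb hsub' (by omega)).1 h
    rcases Finset.mem_union.1 hmem with h' | h'
    · have := Finset.mem_range.1 h'; omega
    · obtain ⟨p, _, hpe⟩ := Finset.mem_image.1 h'
      omega
  · rw [emb_card hsub', offs_card]

open scoped Classical in
lemma mem_domainD_elim {i : ℕ} {x : ℕ × ℕ × Fin n × Finset ℕ} (hx : x ∈ domainD n i) :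
    ∃ S : Finset (Fin (n - x.1 - 2)), 3 ≤ x.1 ∧ x.1 ≤ i - 1 ∧ 4 ≤ i ∧ x.2.1 < x.1 + 2 ∧
      IsDomSet (pathGraph (n - x.1 - 2)) S ∧ S.card = i - x.1 ∧
      x.2.2.2 = S.map ⟨Fin.val, Fin.val_injective⟩ := by
  obtain ⟨k, hk, hxk⟩ := Finset.mem_biUnion.1 hx
  rw [Finset.mem_product] at hxk
  obtain ⟨hk1, hxk2⟩ := hxk
  have hkx : x.1 = k := Finset.mem_singleton.1 hk1
  rw [Finset.mem_product] at hxk2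
  obtain ⟨hj, hxk3⟩ := hxk2
  rw [Finset.mem_product] at hxk3
  obtain ⟨-, hsmem⟩ := hxk3
  obtain ⟨S, hS, hSe⟩ := Finset.mem_image.1 hsmem
  rw [dsFin, Finset.mem_filter] at hS
  have hkIcc := Finset.mem_Icc.1 hk
  subst hkx
  exact ⟨S, hkIcc.1, hkIcc.2, by omega, Finset.mem_range.1 hj, hS.2.1, hS.2.2, hSe.symm⟩


open scoped Classical in
lemma Fmap_mapsTo {i : ℕ} (hn : 6 ≤ n) (hi2 : i ≤ n / 2)
    {x : ℕ × ℕ × Fin n × Finset ℕ} (hx : x ∈ domainD n i) :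
    Fmap n x ∈ targetQ n i := by
  obtain ⟨k, j, t, s⟩ := x
  obtain ⟨S, hk3, hki, hi4, hj, hS, hScard, hse⟩ := mem_domainD_elim hx
  simp only at hk3 hki hj hS hScard hse
  have hkn : k + 4 ≤ n := by omega
  set β : Fin n := t - ((j : ℕ) : Fin n) + 1 with hβ
  have hs : s ⊆ Finset.range (n - k - 2) := by
    rw [hse]
    intro p hp
    obtain ⟨q, _, rfl⟩ := Finset.mem_map.1 hp
    exact Finset.mem_range.2 q.isLt
  obtain ⟨hblock, hnl, hnr, hcard, hsub⟩ := block_facts (by omega) hkn hs β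
  set D : Finset (Fin n) := emb β (offs k s) with hD
  have hDdom : IsDomSet (cycleGraph n) D := by
    rw [hD, hse]
    exact encode_dom (by omega) (by omega) β hS
  have hDcard : D.card = i := by
    rw [hcard, hse, Finset.card_map, hScard]; omega
  have hDads : D ∈ adsFin n i := by
    rw [adsFin, Finset.mem_filter]
    exact ⟨Finset.mem_univ _,
      ⟨hDdom, fun E hE _ => encode_acc hk3 (by omega) β hs E hE⟩, hDcard⟩
  have hv : (if j = 0 then ((β : Fin n), true) else if j = k+1 then (β + 1, true)
      else (t, false)).1 ∈ D := by
    by_cases h0 : j = 0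
    · simp only [h0, if_pos]
      have h00 : β = β + ((0 : ℕ) : Fin n) := by rw [Nat.cast_zero, add_zero]
      rw [h00]; exact hblock 0 (by omega)
    by_cases h1 : j = k + 1
    · rw [if_neg h0, if_pos h1]
      show β + 1 ∈ D
      have h11 : β + 1 = β + ((1 : ℕ) : Fin n) := by rw [Nat.cast_one]
      rw [h11]; exact hblock 1 (by omega)
    · rw [if_neg h0, if_neg h1]
      have hj1 : ((j : ℕ) : Fin n) = ((j - 1 : ℕ) : Fin n) + 1 := by
        rw [← cast_succ_eq]; congr 1; omega
      show t ∈ D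
      have htj : t = β + ((j - 1 : ℕ) : Fin n) := by rw [hβ, hj1]; ring
      rw [htj]; exact hblock (j-1) (by omega)
  rw [targetQ, Finset.mem_biUnion]
  refine ⟨D, hDads, ?_⟩
  rw [Finset.mem_product]
  constructor
  · simp [Fmap, hD, hβ]
  · rw [Finset.mem_product]
    exact ⟨hv, Finset.mem_univ _⟩


open scoped Classical in
lemma Fmap_injOn {i : ℕ} (hn : 6 ≤ n) (hi2 : i ≤ n / 2) :
    Set.InjOn (Fmap n) ↑(domainD n i) := by
  rintro ⟨k, j, t, s⟩ hx ⟨k', j', t', s'⟩ hx' heq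
  rw [Finset.mem_coe] at hx hx'
  obtain ⟨S, hk3, hki, hi4, hj, hS, hScard, hse⟩ := mem_domainD_elim hx
  obtain ⟨S', hk3', hki', -, hj', hS', hScard', hse'⟩ := mem_domainD_elim hx'
  simp only at hk3 hki hi4 hj hS hScard hse hk3' hki' hj' hS' hScard' hse'
  have hkn : k + 4 ≤ n := by omega
  have hkn' : k' + 4 ≤ n := by omega
  set β : Fin n := t - ((j : ℕ) : Fin n) + 1 with hβ
  set β' : Fin n := t' - ((j' : ℕ) : Fin n) + 1 with hβ'
  have hs : s ⊆ Finset.range (n - k - 2) := by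
    rw [hse]; intro p hp
    obtain ⟨q, _, rfl⟩ := Finset.mem_map.1 hp
    exact Finset.mem_range.2 q.isLt
  have hs' : s' ⊆ Finset.range (n - k' - 2) := by
    rw [hse']; intro p hp
    obtain ⟨q, _, rfl⟩ := Finset.mem_map.1 hp
    exact Finset.mem_range.2 q.isLt
  obtain ⟨hblock, hnl, hnr, -, hsub⟩ := block_facts (by omega) hkn hs β
  obtain ⟨hblock', hnl', hnr', -, hsub'⟩ := block_facts (by omega) hkn' hs' β'
  have heq1 : emb β (offs k s) = emb β' (offs k' s') := congrArg Prod.fst heq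
  have heq2 : (if j = 0 then ((β : Fin n), true) else if j = k+1 then (β + 1, true)
      else (t, false))
      = (if j' = 0 then ((β' : Fin n), true) else if j' = k'+1 then (β' + 1, true)
      else (t', false)) := congrArg Prod.snd heq
  rw [← heq1] at hblock' hnl' hnr'
  have key : ∀ d d' : ℕ, d < k → d' < k' →
      β + ((d : ℕ) : Fin n) = β' + ((d' : ℕ) : Fin n) → β = β' ∧ k = k' :=
    fun d d' hd hd' hv =>
      run_eq hblock hnl hnr hblock' hnl' hnr' hd hd' hv (by omega)
  -- a tail that finishes given the base/length/index equalities
  have tail : β = β' → k = k' → j = j' → (k, j, t, s) = (k', j', t', s') := by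
    intro hbb hkk hjj
    have ht : t = t' := by
      have h1 : t = β + ((j : ℕ) : Fin n) - 1 := by rw [hβ]; ring
      have h2 : t' = β' + ((j' : ℕ) : Fin n) - 1 := by rw [hβ']; ring
      rw [h1, h2, hbb, hjj]
    have hss : s = s' := by
      apply offs_inj (k := k)
      have : offs k' s' ⊆ Finset.range n := hsub'
      rw [← hkk] at this
      apply emb_inj hsub this
      rw [heq1, hbb, hkk]
    simp only [Prod.mk.injEq]
    exact ⟨hkk, hjj, ht, hss⟩
  have cast01 : ((0 : ℕ) : Fin n) ≠ ((1 : ℕ) : Fin n) := by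
    intro h
    have := cast_inj_lt (by omega) (by omega) h
    omega
  by_cases h0 : j = 0
  · by_cases h0' : j' = 0
    · rw [if_pos h0, if_pos h0'] at heq2
      have hv : β = β' := (Prod.ext_iff.1 heq2).1
      have hv' : β + ((0 : ℕ) : Fin n) = β' + ((0 : ℕ) : Fin n) := by
        rw [Nat.cast_zero, add_zero, add_zero, hv]
      obtain ⟨hbb, hkk⟩ := key 0 0 (by omega) (by omega) hv'
      exact tail hbb hkk (by omega)
    by_cases h1' : j' = k' + 1
    · rw [if_pos h0, if_neg h0', if_pos h1'] at heq2
      have hv : β = β' + 1 := (Prod.ext_iff.1 heq2).1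
      have hv' : β + ((0 : ℕ) : Fin n) = β' + ((1 : ℕ) : Fin n) := by
        rw [Nat.cast_zero, add_zero, Nat.cast_one, hv]
      obtain ⟨hbb, -⟩ := key 0 1 (by omega) (by omega) hv'
      exfalso
      rw [hbb] at hv
      have h01 : β' + (0 : Fin n) = β' + 1 := by rw [add_zero]; exact hv
      apply cast01
      rw [Nat.cast_zero, Nat.cast_one]
      exact add_left_cancel h01
    · rw [if_pos h0, if_neg h0', if_neg h1'] at heq2
      exact absurd ((Prod.ext_iff.1 heq2).2) (by simp)
  by_cases h1 : j = k + 1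
  · by_cases h0' : j' = 0
    · rw [if_neg h0, if_pos h1, if_pos h0'] at heq2
      have hv : β + 1 = β' := (Prod.ext_iff.1 heq2).1
      have hv' : β + ((1 : ℕ) : Fin n) = β' + ((0 : ℕ) : Fin n) := by
        rw [Nat.cast_zero, add_zero, Nat.cast_one, hv]
      obtain ⟨hbb, -⟩ := key 1 0 (by omega) (by omega) hv'
      exfalso
      rw [hbb] at hv
      have h01 : β' + (0 : Fin n) = β' + 1 := by rw [add_zero]; exact hv.symm
      apply cast01
      rw [Nat.cast_zero, Nat.cast_one]
      exact add_left_cancel h01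
    by_cases h1' : j' = k' + 1
    · rw [if_neg h0, if_pos h1, if_neg h0', if_pos h1'] at heq2
      have hv : β + 1 = β' + 1 := (Prod.ext_iff.1 heq2).1
      have hv' : β + ((1 : ℕ) : Fin n) = β' + ((1 : ℕ) : Fin n) := by
        rw [Nat.cast_one, hv]
      obtain ⟨hbb, hkk⟩ := key 1 1 (by omega) (by omega) hv'
      exact tail hbb hkk (by omega)
    · rw [if_neg h0, if_pos h1, if_neg h0', if_neg h1'] at heq2
      exact absurd ((Prod.ext_iff.1 heq2).2) (by simp)
  · by_cases h0' : j' = 0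
    · rw [if_neg h0, if_neg h1, if_pos h0'] at heq2
      exact absurd ((Prod.ext_iff.1 heq2).2) (by simp)
    by_cases h1' : j' = k' + 1
    · rw [if_neg h0, if_neg h1, if_neg h0', if_pos h1'] at heq2
      exact absurd ((Prod.ext_iff.1 heq2).2) (by simp)
    · rw [if_neg h0, if_neg h1, if_neg h0', if_neg h1'] at heq2
      have hv : t = t' := (Prod.ext_iff.1 heq2).1
      have htj : t = β + ((j - 1 : ℕ) : Fin n) := by
        have hj1 : ((j : ℕ) : Fin n) = ((j - 1 : ℕ) : Fin n) + 1 := by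
          rw [← cast_succ_eq]; congr 1; omega
        rw [hβ, hj1]; ring
      have htj' : t' = β' + ((j' - 1 : ℕ) : Fin n) := by
        have hj1 : ((j' : ℕ) : Fin n) = ((j' - 1 : ℕ) : Fin n) + 1 := by
          rw [← cast_succ_eq]; congr 1; omega
        rw [hβ', hj1]; ring
      have hv' : β + ((j - 1 : ℕ) : Fin n) = β' + ((j' - 1 : ℕ) : Fin n) := by
        rw [← htj, ← htj', hv]
      obtain ⟨hbb, hkk⟩ := key (j-1) (j'-1) (by omega) (by omega) hv'
      have hjj : j = j' := by
        rw [hbb] at hv'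
        have := cast_inj_lt (a := j - 1) (b := j' - 1) (by omega) (by omega)
          (add_left_cancel hv')
        omega
      exact tail hbb hkk hjj

end Main


/-- Lower bound for the number of accurate dominating sets of the cycle `C_n` of
cardinality `i`, for `⌊n/3⌋ + 2 ≤ i ≤ ⌊n/2⌋`. -/
theorem cycle_numAccDomSets_lower (n i : ℕ) (hn : 6 ≤ n)
    (h1 : n / 3 + 2 ≤ i) (h2 : i ≤ n / 2) :
    (∑ k ∈ Finset.Icc 3 (i - 1),
        (k + 2) * numDomSets (SimpleGraph.pathGraph (n - k - 2)) (i - k)) ≤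
    numAccDomSets (SimpleGraph.cycleGraph n) i := by
  haveI : NeZero n := ⟨by omega⟩
  rw [numAccDomSets_eq_card]
  have hsum : (∑ k ∈ Finset.Icc 3 (i - 1),
      (k + 2) * numDomSets (SimpleGraph.pathGraph (n - k - 2)) (i - k))
      = ∑ k ∈ Finset.Icc 3 (i - 1), (k + 2) * (dsFin (n-k-2) (i-k)).card :=
    Finset.sum_congr rfl (fun k _ => by rw [numDomSets_eq_card])
  rw [hsum]
  have hcard_le : (domainD n i).card ≤ (targetQ n i).card :=
    Finset.card_le_card_of_injOn (Fmap n) (fun x hx => Fmap_mapsTo hn h2 hx)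
      (Fmap_injOn hn h2)
  rw [card_domainD, card_targetQ] at hcard_le
  have hL : ∑ k ∈ Finset.Icc 3 (i-1), (k+2)*(n*(dsFin (n-k-2) (i-k)).card)
      = n * ∑ k ∈ Finset.Icc 3 (i-1), (k+2)*(dsFin (n-k-2) (i-k)).card := by
    rw [Finset.mul_sum]
    exact Finset.sum_congr rfl (fun k _ => by ring)
  rw [hL] at hcard_le
  have h2i : i * 2 ≤ n := by omega
  have hfin : n * (∑ k ∈ Finset.Icc 3 (i-1), (k+2)*(dsFin (n-k-2) (i-k)).card)
      ≤ n * (adsFin n i).card := by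
    calc n * (∑ k ∈ Finset.Icc 3 (i-1), (k+2)*(dsFin (n-k-2) (i-k)).card)
        ≤ (adsFin n i).card * (i * 2) := hcard_le
      _ ≤ (adsFin n i).card * n := Nat.mul_le_mul_left _ h2i
      _ = n * (adsFin n i).card := Nat.mul_comm _ _
  exact Nat.le_of_mul_le_mul_left hfin (by omega)
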